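/- arXiv:math/0602185 — 7 statements merged into one kernel-verified Lean document; each statement's English description precedes it below -/
import Mathlib

section
/- Let ω ∈ ℓ¹(ℕ) be nonnegative with ∑ ωᵢ = 1, and let r₁, r_∞ > 0. The open ℓ¹-ball of radius r₁ centered at 0 and the set of sequences within ℓ∞-distance r_∞ of ω intersect (i.e., there exists x ∈ ℓ¹ with ‖x‖₁ < r₁ and ‖x - ω‖_∞ < r_∞) if and only if ∑ᵢ max(0, ωᵢ - r_∞) < r₁. -/
private lemma lp_one_summable (f : lp (fun _ : ℕ => ℝ) 1) : Summable fun i => |f i| := by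
  have := (lp.memℓp f).summable (p := 1) (by norm_num)
  simpa using this

private lemma lp_one_norm (f : lp (fun _ : ℕ => ℝ) 1) : ‖f‖ = ∑' i, |f i| := by
  have := lp.norm_eq_tsum_rpow (p := 1) (by norm_num) f
  simpa using this

theorem stmt_4 (ω : lp (fun _ : ℕ => ℝ) 1) (hpos : ∀ i, 0 ≤ ω i)
    (hone : ∑' i, ω i = 1) (r₁ r_inf : ℝ) (hr₁ : 0 < r₁) (hrinf : 0 < r_inf) :
    (∃ x : lp (fun _ : ℕ => ℝ) 1, ‖x‖ < r₁ ∧ (⨆ i, |x i - ω i|) < r_inf) ↔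
      (∑' i, max 0 (ω i - r_inf)) < r₁ := by
  have hωs : Summable fun i => ω i :=
    (lp_one_summable ω).congr fun i => abs_of_nonneg (hpos i)
  have hmaxsum : Summable fun i => max 0 (ω i - r_inf) :=
    hωs.of_nonneg_of_le (fun i => le_max_left _ _)
      (fun i => max_le (hpos i) (by linarith [hrinf]))
  constructor
  · rintro ⟨x, hx1, hx2⟩
    have hxs := lp_one_summable x
    have hbdd : BddAbove (Set.range fun i => |x i - ω i|) := by
      refine ⟨‖x - ω‖, ?_⟩
      rintro _ ⟨i, rfl⟩
      have := lp.norm_apply_le_norm (E := fun _ : ℕ => ℝ) one_ne_zero (x - ω) i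
      simpa using this
    refine lt_of_le_of_lt (Summable.tsum_le_tsum (fun i => ?_) hmaxsum hxs) ?_
    · have h1 : |x i - ω i| ≤ ⨆ j, |x j - ω j| := le_ciSup hbdd i
      have h2 : ω i - r_inf ≤ |x i| := by
        have h3 := abs_sub_abs_le_abs_sub (ω i) (x i)
        rw [abs_of_nonneg (hpos i), abs_sub_comm] at h3
        linarith
      exact max_le (abs_nonneg _) h2
    · rw [← lp_one_norm x]; exact hx1
  · intro h
    set S := ∑' i, max 0 (ω i - r_inf) with hS
    have hδ : 0 < r₁ - S := by linarith
    set δ := r₁ - S with hδdef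
    obtain ⟨F, hF⟩ : ∃ F : Finset ℕ, ∑' i : {y // y ∉ F}, ω i < δ / 2 := by
      have := (tendsto_order.1 (tendsto_tsum_compl_atTop_zero (fun i => ω i))).2 _
        (by positivity : (0:ℝ) < δ / 2)
      exact this.exists
    set t := min (r_inf / 2) (δ / (2 * (F.card + 1))) with ht
    have ht0 : 0 < t := lt_min (by positivity) (by positivity)
    have htr : t < r_inf := lt_of_le_of_lt (min_le_left _ _) (by linarith)
    set c := r_inf - t with hc
    have hc0 : 0 < c := by simp only [hc]; linarith
    set x : ℕ → ℝ := fun i => max 0 (ω i - c) with hx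
    have hx0 : ∀ i, 0 ≤ x i := fun i => le_max_left _ _
    have hxle : ∀ i, x i ≤ ω i := fun i => max_le (hpos i) (by linarith [hc0])
    have hxs : Summable x := hωs.of_nonneg_of_le hx0 hxle
    have hmem : Memℓp x 1 := by
      apply memℓp_gen
      have : (fun i => ‖x i‖ ^ (1 : ENNReal).toReal) = x := by
        funext i
        simp [Real.norm_eq_abs, abs_of_nonneg (hx0 i)]
      rw [this]; exact hxs
    have hmins : Summable fun i => min (ω i) t :=
      hωs.of_nonneg_of_le (fun i => le_min (hpos i) ht0.le) (fun i => min_le_left _ _)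
    have hpt : ∀ i, x i ≤ max 0 (ω i - r_inf) + min (ω i) t := by
      intro i
      rcases le_total (ω i) c with h1 | h1
      · have hxi : x i = 0 := max_eq_left (by linarith)
        rw [hxi]
        exact add_nonneg (le_max_left _ _) (le_min (hpos i) ht0.le)
      · have hxi : x i = ω i - c := max_eq_right (by linarith)
        rcases le_total (ω i) r_inf with h2 | h2
        · have hmin : ω i - c ≤ min (ω i) t :=
            le_min (by linarith) (by simp only [hc] at *; linarith)
          have := le_max_left 0 (ω i - r_inf)
          rw [hxi]; linarith
        · have hm : min (ω i) t = t := min_eq_right (by linarith)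
          have hM : max 0 (ω i - r_inf) = ω i - r_inf := max_eq_right (by linarith)
          rw [hxi, hm, hM, hc]; ring_nf; exact le_refl _
    have hcardt : (F.card : ℝ) * t ≤ δ / 2 := by
      have h2 : t ≤ δ / (2 * (F.card + 1)) := min_le_right _ _
      have h3 : (F.card : ℝ) * t ≤ (F.card : ℝ) * (δ / (2 * (F.card + 1))) :=
        mul_le_mul_of_nonneg_left h2 (Nat.cast_nonneg _)
      have hden : (0:ℝ) < 2 * (F.card + 1) := by positivity
      have hd0 : (0:ℝ) ≤ δ / (2 * (F.card + 1)) := by positivity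
      have hkey : (F.card : ℝ) * (δ / (2 * (F.card + 1))) ≤ δ / 2 := by
        nlinarith [div_mul_cancel₀ δ (ne_of_gt hden)]
      linarith
    have hT : ∑' i, min (ω i) t < δ := by
      have hsplit := Summable.sum_add_tsum_compl (s := F) hmins
      have hb1 : ∑ i ∈ F, min (ω i) t ≤ (F.card : ℝ) * t := by
        have := Finset.sum_le_card_nsmul F (fun i => min (ω i) t) t
          (fun i _ => min_le_right _ _)
        simpa [nsmul_eq_mul] using this
      have hb2 : ∑' i : {y // y ∉ F}, min (ω (i : ℕ)) t ≤ ∑' i : {y // y ∉ F}, ω i := by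
        refine Summable.tsum_le_tsum (fun i => min_le_left _ _) ?_ ?_
        · exact hmins.subtype _
        · exact hωs.subtype _
      have hcompl : (∑' i : ↑((F : Set ℕ))ᶜ, min (ω (i : ℕ)) t) ≤ ∑' i : {y // y ∉ F}, ω i := by
        exact hb2
      rw [← hsplit]
      calc ∑ i ∈ F, min (ω i) t + ∑' i : ↑((F : Set ℕ))ᶜ, min (ω (i : ℕ)) t
          ≤ (F.card : ℝ) * t + ∑' i : {y // y ∉ F}, ω i := add_le_add hb1 hcompl
        _ < δ / 2 + δ / 2 := add_lt_add_of_le_of_lt hcardt hF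
        _ = δ := by ring
    have hnormlt : ∑' i, x i < r₁ := by
      calc ∑' i, x i ≤ ∑' i, (max 0 (ω i - r_inf) + min (ω i) t) :=
            Summable.tsum_le_tsum hpt hxs (hmaxsum.add hmins)
        _ = S + ∑' i, min (ω i) t := Summable.tsum_add hmaxsum hmins
        _ < S + δ := by linarith
        _ = r₁ := by simp [hδdef]
    refine ⟨⟨x, hmem⟩, ?_, ?_⟩
    · rw [lp_one_norm]
      have hcoe : ∀ i, ((⟨x, hmem⟩ : lp (fun _ : ℕ => ℝ) 1) : ∀ _ : ℕ, ℝ) i = x i :=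
        fun i => rfl
      calc (∑' i, |((⟨x, hmem⟩ : lp (fun _ : ℕ => ℝ) 1) : ∀ _ : ℕ, ℝ) i|)
          = ∑' i, x i := tsum_congr fun i => by rw [hcoe i, abs_of_nonneg (hx0 i)]
        _ < r₁ := hnormlt
    · refine lt_of_le_of_lt (ciSup_le fun i => ?_) (show c < r_inf by simp only [hc]; linarith)
      show |x i - ω i| ≤ c
      rcases le_total (ω i) c with h1 | h1
      · have hxi : x i = 0 := max_eq_left (by linarith)
        rw [hxi, zero_sub, abs_neg, abs_of_nonneg (hpos i)]; exact h1
      · have hxi : x i = ω i - c := max_eq_right (by linarith)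
        rw [hxi, show ω i - c - ω i = -c by ring, abs_neg, abs_of_nonneg hc0.le]
end

section
/- Let ω, σ be finitely supported nonnegative sequences each summing to 1 and indexed by Fin n. If ∑ᵢ max(0, σᵢ - r) ≤ ∑ᵢ max(0, ωᵢ - r) for all r ≥ 0, then -∑ᵢ σᵢ ln σᵢ ≥ -∑ᵢ ωᵢ ln ωᵢ (with the convention 0 ln 0 = 0). -/
open intervalIntegral MeasureTheory Set

lemma aux_intgr (x a b : ℝ) (ha : 0 < a) (hb : 0 < b) :
    IntervalIntegrable (fun r => max 0 (x - r) / r) volume a b := by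
  apply ContinuousOn.intervalIntegrable
  apply ContinuousOn.div
  · exact (continuous_const.max (continuous_const.sub continuous_id)).continuousOn
  · exact continuousOn_id
  · intro r hr
    exact ne_of_gt (lt_of_lt_of_le (lt_min ha hb) hr.1)

lemma aux_evalA (x ε : ℝ) (hx : x ≤ ε) (hε1 : ε ≤ 1) :
    ∫ r in ε..1, max 0 (x - r) / r = 0 := by
  rw [intervalIntegral.integral_congr (g := fun _ => (0:ℝ))]
  · simp
  · intro r hr
    rw [Set.uIcc_of_le hε1] at hr
    have h1 : x - r ≤ 0 := by linarith [hr.1]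
    simp only
    rw [max_eq_left h1, zero_div]

lemma aux_evalB (x ε : ℝ) (hε : 0 < ε) (hεx : ε ≤ x) (hx1 : x ≤ 1) :
    ∫ r in ε..1, max 0 (x - r) / r
      = x * Real.log x - x * Real.log ε - x + ε := by
  have hx0 : 0 < x := lt_of_lt_of_le hε hεx
  have hint1 : IntervalIntegrable (fun r : ℝ => x * (1/r)) volume ε x := by
    apply ContinuousOn.intervalIntegrable
    apply ContinuousOn.mul continuousOn_const
    apply ContinuousOn.div continuousOn_const continuousOn_id
    intro r hr
    rw [Set.uIcc_of_le hεx] at hr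
    exact ne_of_gt (lt_of_lt_of_le hε hr.1)
  have h1 : ∫ r in ε..x, max 0 (x - r) / r = ∫ r in ε..x, (x * (1/r) - 1) := by
    apply intervalIntegral.integral_congr
    intro r hr
    rw [Set.uIcc_of_le hεx] at hr
    have hr0 : 0 < r := lt_of_lt_of_le hε hr.1
    simp only
    rw [max_eq_right (by linarith [hr.2])]
    field_simp
  have h2 : ∫ r in x..1, max 0 (x - r) / r = 0 := by
    rw [intervalIntegral.integral_congr (g := fun _ => (0:ℝ))]
    · simp
    · intro r hr
      rw [Set.uIcc_of_le hx1] at hr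
      have h1 : x - r ≤ 0 := by linarith [hr.1]
      simp only
      rw [max_eq_left h1, zero_div]
  rw [← integral_add_adjacent_intervals (aux_intgr x ε x hε hx0) (aux_intgr x x 1 hx0 one_pos),
    h1, h2, add_zero, intervalIntegral.integral_sub hint1 intervalIntegrable_const,
    intervalIntegral.integral_const_mul, integral_one_div, intervalIntegral.integral_const,
    Real.log_div (ne_of_gt hx0) (ne_of_gt hε)]
  · simp only [smul_eq_mul]; ring
  · rw [Set.uIcc_of_le hεx]
    intro h0
    exact absurd h0.1 (not_le.2 hε)

lemma aux_key (n : ℕ) (ω σ : Fin n → ℝ) (hω : ∀ i, 0 ≤ ω i) (hσ : ∀ i, 0 ≤ σ i)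
    (hω1 : ∑ i, ω i = 1) (hσ1 : ∑ i, σ i = 1)
    (h : ∀ r : ℝ, 0 ≤ r → ∑ i, max 0 (σ i - r) ≤ ∑ i, max 0 (ω i - r))
    (ε : ℝ) (hε : 0 < ε) (hε1 : ε ≤ 1)
    (hεσ : ∀ i, σ i ≠ 0 → ε ≤ σ i) (hεω : ∀ i, ω i ≠ 0 → ε ≤ ω i) :
    ∑ i, σ i * Real.log (σ i) ≤ ∑ i, ω i * Real.log (ω i) + n * ε := by
  have hle1 : ∀ (x : Fin n → ℝ), (∀ i, 0 ≤ x i) → ∑ i, x i = 1 → ∀ i, x i ≤ 1 := by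
    intro x hx hx1 i
    calc x i ≤ ∑ j, x j := Finset.single_le_sum (fun j _ => hx j) (Finset.mem_univ i)
    _ = 1 := hx1
  -- integrability of sum-integrands
  have hint : ∀ (x : Fin n → ℝ),
      IntervalIntegrable (fun r => (∑ i, max 0 (x i - r)) / r) volume ε 1 := by
    intro x
    apply ContinuousOn.intervalIntegrable
    apply ContinuousOn.div
    · exact (continuous_finset_sum _ fun i _ =>
        continuous_const.max (continuous_const.sub continuous_id)).continuousOn
    · exact continuousOn_id
    · intro r hr
      rw [Set.uIcc_of_le hε1] at hr
      exact ne_of_gt (lt_of_lt_of_le hε hr.1)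
  have mono : ∫ r in ε..1, (∑ i, max 0 (σ i - r)) / r
      ≤ ∫ r in ε..1, (∑ i, max 0 (ω i - r)) / r := by
    apply intervalIntegral.integral_mono_on hε1 (hint σ) (hint ω)
    intro r hr
    have hr0 : 0 < r := lt_of_lt_of_le hε hr.1
    exact div_le_div_of_nonneg_right (h r hr0.le) hr0.le
  have swap : ∀ x : Fin n → ℝ, ∫ r in ε..1, (∑ i, max 0 (x i - r)) / r
      = ∑ i, ∫ r in ε..1, max 0 (x i - r) / r := by
    intro x
    simp_rw [Finset.sum_div]
    exact intervalIntegral.integral_finset_sum (fun i _ => aux_intgr (x i) ε 1 hε one_pos)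
  have evalx : ∀ (x : Fin n → ℝ), (∀ i, 0 ≤ x i) → (∑ i, x i = 1) → (∀ i, x i ≠ 0 → ε ≤ x i) →
      ∑ i, ∫ r in ε..1, max 0 (x i - r) / r
        = ∑ i, (x i * Real.log (x i) - x i * Real.log ε - x i + (if x i = 0 then 0 else ε)) := by
    intro x hx hx1 hεx
    apply Finset.sum_congr rfl
    intro i _
    by_cases hi : x i = 0
    · rw [hi, aux_evalA 0 ε hε.le hε1]
      simp
    · rw [aux_evalB (x i) ε hε (hεx i hi) (hle1 x hx hx1 i), if_neg hi]
  rw [swap σ, swap ω, evalx σ hσ hσ1 hεσ, evalx ω hω hω1 hεω] at mono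
  simp only [Finset.sum_add_distrib, Finset.sum_sub_distrib, ← Finset.sum_mul, hσ1, hω1,
    one_mul] at mono
  have hTσ : 0 ≤ ∑ i, (if σ i = 0 then (0:ℝ) else ε) :=
    Finset.sum_nonneg fun i _ => by split <;> simp [hε.le]
  have hTω : ∑ i, (if ω i = 0 then (0:ℝ) else ε) ≤ n * ε := by
    calc ∑ i, (if ω i = 0 then (0:ℝ) else ε) ≤ ∑ _i : Fin n, ε :=
          Finset.sum_le_sum (fun i _ => by split <;> simp [hε.le])
      _ = n * ε := by simp [Finset.sum_const, nsmul_eq_mul]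
  linarith

theorem stmt_7 (n : ℕ) (ω σ : Fin n → ℝ) (hω : ∀ i, 0 ≤ ω i) (hσ : ∀ i, 0 ≤ σ i)
    (hω1 : ∑ i, ω i = 1) (hσ1 : ∑ i, σ i = 1)
    (h : ∀ r : ℝ, 0 ≤ r → ∑ i, max 0 (σ i - r) ≤ ∑ i, max 0 (ω i - r)) :
    -∑ i, ω i * Real.log (ω i) ≤ -∑ i, σ i * Real.log (σ i) := by
  apply neg_le_neg
  have hev : ∀ (x : Fin n → ℝ), (∀ i, 0 ≤ x i) →
      ∀ᶠ ε in nhdsWithin (0:ℝ) (Set.Ioi 0), ∀ i, x i ≠ 0 → ε ≤ x i := by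
    intro x hx
    rw [Filter.eventually_all]
    intro i
    by_cases hi : x i = 0
    · exact Filter.Eventually.of_forall (fun ε hne => absurd hi hne)
    · have hxi : 0 < x i := lt_of_le_of_ne (hx i) (Ne.symm hi)
      filter_upwards [Ioo_mem_nhdsGT_of_mem (Set.mem_Ico.mpr ⟨le_refl 0, hxi⟩)] with ε hε _
      exact hε.2.le
  have htend : Filter.Tendsto (fun ε : ℝ => ∑ i, ω i * Real.log (ω i) + n * ε)
      (nhdsWithin (0:ℝ) (Set.Ioi 0)) (nhds (∑ i, ω i * Real.log (ω i))) := by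
    have hc : Continuous (fun ε : ℝ => ∑ i, ω i * Real.log (ω i) + n * ε) := by continuity
    have := (hc.tendsto 0).mono_left (nhdsWithin_le_nhds (s := Set.Ioi (0:ℝ)))
    simpa using this
  apply ge_of_tendsto htend
  filter_upwards [hev σ hσ, hev ω hω,
    Ioo_mem_nhdsGT_of_mem (Set.mem_Ico.mpr ⟨le_refl (0:ℝ), one_pos⟩),
    self_mem_nhdsWithin] with ε hεσ hεω hε1 hε0
  exact aux_key n ω σ hω hσ hω1 hσ1 h ε hε0 hε1.2.le hεσ hεω
end

section
/- Let T : ℓ¹(ℕ) → ℓ¹(ℕ) be a linear map such that ‖T x‖₁ ≤ ‖x‖₁ for all x ∈ ℓ¹ and ‖T x‖_∞ ≤ ‖x‖_∞ for all x ∈ ℓ¹. Then for any nonnegative ω ∈ ℓ¹ with ∑ ωᵢ = 1 and any r ≥ 0, if Tω is nonnegative with ∑ (Tω)ᵢ = 1, then ∑ᵢ max(0, (Tω)ᵢ - r) ≤ ∑ᵢ max(0, ωᵢ - r). -/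
theorem stmt_8 (T : lp (fun _ : ℕ => ℝ) 1 →ₗ[ℝ] lp (fun _ : ℕ => ℝ) 1)
    (hT1 : ∀ x, ‖T x‖ ≤ ‖x‖)
    (hTinf : ∀ x, (⨆ i, |(T x) i|) ≤ ⨆ i, |x i|)
    (ω : lp (fun _ : ℕ => ℝ) 1) (hpos : ∀ i, 0 ≤ ω i) (hone : ∑' i, ω i = 1)
    (hTpos : ∀ i, 0 ≤ (T ω) i) (hTone : ∑' i, (T ω) i = 1)
    (r : ℝ) (hr : 0 ≤ r) :
    (∑' i, max 0 ((T ω) i - r)) ≤ ∑' i, max 0 (ω i - r) := by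
  have hp1 : (0:ℝ) < (1 : ENNReal).toReal := by norm_num
  have hnorm_tsum : ∀ x : lp (fun _ : ℕ => ℝ) 1, ‖x‖ = ∑' i, ‖x i‖ := by
    intro x
    simpa using lp.norm_rpow_eq_tsum hp1 x
  have hsummable : ∀ x : lp (fun _ : ℕ => ℝ) 1, Summable fun i => ‖x i‖ := by
    intro x
    simpa using (lp.memℓp x).summable hp1
  -- the positive part v
  have hvmem : Memℓp (fun i => max 0 (ω i - r)) (1 : ENNReal) := by
    apply memℓp_gen
    simp only [ENNReal.toReal_one, Real.rpow_one]
    refine (hsummable ω).of_nonneg_of_le (fun i => norm_nonneg _) fun i => ?_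
    rw [Real.norm_eq_abs, abs_of_nonneg (le_max_left _ _), Real.norm_eq_abs,
      abs_of_nonneg (hpos i)]
    exact max_le (hpos i) (by linarith)
  set v : lp (fun _ : ℕ => ℝ) 1 := ⟨fun i => max 0 (ω i - r), hvmem⟩ with hv
  have hvapp : ∀ i, v i = max 0 (ω i - r) := fun i => rfl
  set u := ω - v with hu
  have huapp : ∀ i, u i = min (ω i) r := by
    intro i
    have : u i = ω i - v i := by
      rw [hu]; exact lp.coeFn_sub ω v ▸ rfl
    rw [this, hvapp]
    rcases le_total (ω i) r with h | h
    · rw [max_eq_left (by linarith), min_eq_left h]; ring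
    · rw [max_eq_right (by linarith), min_eq_right h]; ring
  have huv : ω = u + v := by rw [hu]; abel
  -- sup bound on u
  have hu_le : ∀ i, |u i| ≤ r := by
    intro i
    rw [huapp, abs_of_nonneg (le_min (hpos i) hr)]
    exact min_le_right _ _
  have hTu_le : ∀ i, (T u) i ≤ r := by
    intro i
    have hbdd : BddAbove (Set.range fun j => |(T u) j|) := by
      refine ⟨∑' j, ‖(T u) j‖, ?_⟩
      rintro x ⟨j, rfl⟩
      exact Summable.le_tsum (hsummable (T u)) j fun k _ => norm_nonneg _
    calc (T u) i ≤ |(T u) i| := le_abs_self _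
      _ ≤ ⨆ j, |(T u) j| := le_ciSup hbdd i
      _ ≤ ⨆ j, |u j| := hTinf u
      _ ≤ r := ciSup_le hu_le
  -- termwise bound
  have hterm : ∀ i, max 0 ((T ω) i - r) ≤ ‖(T v) i‖ := by
    intro i
    have hsplit : (T ω) i = (T u) i + (T v) i := by
      rw [huv, map_add]
      exact lp.coeFn_add (T u) (T v) ▸ rfl
    rw [Real.norm_eq_abs]
    refine max_le (abs_nonneg _) ?_
    have h1 := hTu_le i
    have h2 := le_abs_self ((T v) i)
    linarith [hsplit ▸ (by linarith : (T u) i + (T v) i - r ≤ |(T v) i|)]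
  calc (∑' i, max 0 ((T ω) i - r)) ≤ ∑' i, ‖(T v) i‖ := by
        refine Summable.tsum_le_tsum hterm ?_ (hsummable (T v))
        exact (hsummable (T v)).of_nonneg_of_le (fun i => le_max_left _ _) hterm
    _ = ‖T v‖ := (hnorm_tsum (T v)).symm
    _ ≤ ‖v‖ := hT1 v
    _ = ∑' i, ‖v i‖ := hnorm_tsum v
    _ = ∑' i, max 0 (ω i - r) := by
        congr 1; funext i
        rw [hvapp, Real.norm_eq_abs, abs_of_nonneg (le_max_left _ _)]
end

section
/- Let A be a positive semidefinite n×n Hermitian matrix with trace 1 and eigenvalues λ₁,...,λ_n, and let r ≥ 0. Then the infimum over Hermitian matrices B with ‖A - B‖_op ≤ r of the trace norm ‖B‖₁ equals ∑ᵢ max(0, λᵢ - r). -/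
open scoped ComplexOrder

/-- The `L²` operator norm of a square complex matrix. -/
noncomputable def opNorm {n : ℕ} (B : Matrix (Fin n) (Fin n) ℂ) : ℝ :=
  ‖Matrix.toEuclideanCLM (𝕜 := ℂ) B‖

open Matrix in
lemma trace_eq_sum_eigen {n : ℕ} {B : Matrix (Fin n) (Fin n) ℂ} (hB : B.IsHermitian) :
    B.trace = ∑ i, (hB.eigenvalues i : ℂ) := by
  nth_rewrite 1 [hB.spectral_theorem]
  rw [Unitary.conjStarAlgAut_apply, Matrix.trace_mul_cycle, Unitary.coe_star_mul_self, Matrix.one_mul]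
  simp [Matrix.trace_diagonal]

open Matrix in
lemma opNorm_diagonal_le {n : ℕ} (v : Fin n → ℂ) (r : ℝ) (hr : 0 ≤ r)
    (hv : ∀ i, ‖v i‖ ≤ r) : opNorm (Matrix.diagonal v) ≤ r := by
  rw [opNorm]
  refine ContinuousLinearMap.opNorm_le_bound _ hr fun x => ?_
  have hTx : ∀ i, (Matrix.toEuclideanCLM (𝕜 := ℂ) (Matrix.diagonal v) x) i = v i * x i := by
    intro i
    have := Matrix.ofLp_toEuclideanCLM (𝕜 := ℂ) (Matrix.diagonal v) x
    rw [this]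
    simp [Matrix.mulVec_diagonal]
  rw [EuclideanSpace.norm_eq, EuclideanSpace.norm_eq]
  have h1 : ∑ i, ‖(Matrix.toEuclideanCLM (𝕜 := ℂ) (Matrix.diagonal v) x) i‖ ^ 2
      ≤ r ^ 2 * ∑ i, ‖x i‖ ^ 2 := by
    rw [Finset.mul_sum]
    refine Finset.sum_le_sum fun i _ => ?_
    rw [hTx i, norm_mul, mul_pow]
    have := hv i
    gcongr
  calc Real.sqrt (∑ i, ‖(Matrix.toEuclideanCLM (𝕜 := ℂ) (Matrix.diagonal v) x) i‖ ^ 2)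
      ≤ Real.sqrt (r ^ 2 * ∑ i, ‖x i‖ ^ 2) := Real.sqrt_le_sqrt h1
    _ = r * Real.sqrt (∑ i, ‖x i‖ ^ 2) := by
        rw [Real.sqrt_mul (sq_nonneg r), Real.sqrt_sq hr]

open Matrix in
lemma re_quad_le {n : ℕ} (M : Matrix (Fin n) (Fin n) ℂ) (u : EuclideanSpace ℂ (Fin n))
    (hu : ‖u‖ = 1) :
    Complex.re (dotProduct (star (⇑u : Fin n → ℂ)) (M *ᵥ ⇑u)) ≤ opNorm M := by
  have key : dotProduct (star (⇑u : Fin n → ℂ)) (M *ᵥ ⇑u)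
      = inner ℂ u ((Matrix.toEuclideanCLM (𝕜 := ℂ) M) u) := by
    rw [EuclideanSpace.inner_eq_star_dotProduct]
    rw [dotProduct_comm]; rfl
  rw [key]
  calc Complex.re (inner ℂ u ((Matrix.toEuclideanCLM (𝕜 := ℂ) M) u))
      ≤ ‖(inner ℂ u ((Matrix.toEuclideanCLM (𝕜 := ℂ) M) u) : ℂ)‖ :=
        Complex.re_le_norm _
    _ ≤ ‖u‖ * ‖(Matrix.toEuclideanCLM (𝕜 := ℂ) M) u‖ := norm_inner_le_norm _ _
    _ ≤ ‖u‖ * (‖Matrix.toEuclideanCLM (𝕜 := ℂ) M‖ * ‖u‖) := by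
        exact mul_le_mul_of_nonneg_left (ContinuousLinearMap.le_opNorm _ _) (norm_nonneg u)
    _ = opNorm M := by rw [hu, opNorm]; ring

open Matrix in
lemma lower_bound {n : ℕ} (A : Matrix (Fin n) (Fin n) ℂ) (hA : A.IsHermitian)
    (r : ℝ) (hr : 0 ≤ r) (B : Matrix (Fin n) (Fin n) ℂ) (hB : B.IsHermitian)
    (hd : opNorm (A - B) ≤ r) :
    ∑ i, max 0 (hA.eigenvalues i - r) ≤ ∑ i, |hB.eigenvalues i| := by
  set U : Matrix (Fin n) (Fin n) ℂ := (hA.eigenvectorUnitary : Matrix (Fin n) (Fin n) ℂ) with hU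
  set V : Matrix (Fin n) (Fin n) ℂ := (hB.eigenvectorUnitary : Matrix (Fin n) (Fin n) ℂ) with hV
  set W : Matrix (Fin n) (Fin n) ℂ := star U * V with hW
  set G : Matrix (Fin n) (Fin n) ℂ := star U * (A - B) * U with hG
  have hUU : U * star U = 1 := Matrix.mem_unitaryGroup_iff.mp hA.eigenvectorUnitary.2
  have hVV' : star V * V = 1 := Matrix.mem_unitaryGroup_iff'.mp hB.eigenvectorUnitary.2
  -- key matrix identity
  have hAU : star U * A * U = Matrix.diagonal (RCLike.ofReal ∘ hA.eigenvalues) :=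
    by have := hA.conjStarAlgAut_star_eigenvectorUnitary
       rw [Unitary.conjStarAlgAut_apply] at this
       simpa only [Unitary.coe_star, star_star] using this
  have hBU : star U * B * U = W * Matrix.diagonal (RCLike.ofReal ∘ hB.eigenvalues) * star W := by
    conv_lhs => rw [hB.spectral_theorem, Unitary.conjStarAlgAut_apply]
    rw [hW, Matrix.star_mul, star_star]
    simp only [Matrix.mul_assoc]
    rfl
  have key : Matrix.diagonal (RCLike.ofReal ∘ hA.eigenvalues)
      = W * Matrix.diagonal (RCLike.ofReal ∘ hB.eigenvalues) * star W + G := by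
    rw [← hAU, ← hBU, hG, Matrix.mul_sub, Matrix.sub_mul]
    abel
  -- entrywise identity
  have hmul : ∀ i, (W * Matrix.diagonal (RCLike.ofReal ∘ hB.eigenvalues) * star W
        : Matrix (Fin n) (Fin n) ℂ) i i
      = ∑ j, ((hB.eigenvalues j * Complex.normSq (W i j) : ℝ) : ℂ) := by
    intro i
    rw [Matrix.mul_apply]
    refine Finset.sum_congr rfl fun j _ => ?_
    rw [Matrix.mul_diagonal, Matrix.star_apply]
    have h1 : W i j * star (W i j) = (Complex.normSq (W i j) : ℂ) := Complex.mul_conj _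
    have h2 : (RCLike.ofReal ∘ hB.eigenvalues) j = ((hB.eigenvalues j : ℝ) : ℂ) := rfl
    rw [h2]
    push_cast
    rw [mul_comm (W i j) ((hB.eigenvalues j : ℂ) : ℂ), mul_assoc, h1]
  have entry : ∀ i, hA.eigenvalues i
      = (∑ j, hB.eigenvalues j * Complex.normSq (W i j)) + Complex.re (G i i) := by
    intro i
    have h1 := congrArg (fun X : Matrix (Fin n) (Fin n) ℂ => Complex.re (X i i)) key
    simp only [Matrix.add_apply, Matrix.diagonal_apply_eq, Complex.add_re] at h1
    rw [hmul i] at h1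
    simpa using h1
  -- bound on re G i i
  have hGre : ∀ i, Complex.re (G i i) ≤ r := by
    intro i
    have hGi : G i i = dotProduct (star (⇑(hA.eigenvectorBasis i) : Fin n → ℂ))
        ((A - B) *ᵥ ⇑(hA.eigenvectorBasis i)) := by
      simp only [hG, Matrix.mul_apply, dotProduct, Matrix.mulVec, dotProduct,
        Matrix.star_apply, Pi.star_apply, Finset.sum_mul, Finset.mul_sum]
      rw [Finset.sum_comm]
      refine Finset.sum_congr rfl fun j _ => Finset.sum_congr rfl fun k _ => ?_
      simp only [hU, Matrix.IsHermitian.eigenvectorUnitary_apply]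
      ring
    rw [hGi]
    have hu : ‖hA.eigenvectorBasis i‖ = 1 := hA.eigenvectorBasis.orthonormal.1 i
    exact le_trans (re_quad_le (A - B) (hA.eigenvectorBasis i) hu) hd
  -- column sums of W
  have hWu : star W * W = 1 := by
    rw [hW, Matrix.star_mul, star_star, Matrix.mul_assoc, ← Matrix.mul_assoc U (star U) V,
      hUU, Matrix.one_mul, hVV']
  have hcol : ∀ j, ∑ i, Complex.normSq (W i j) = 1 := by
    intro j
    have h1 := congrArg (fun X : Matrix (Fin n) (Fin n) ℂ => Complex.re (X j j)) hWu
    simp only [Matrix.mul_apply, Matrix.star_apply, Matrix.one_apply_eq] at h1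
    have h2 : ∀ i, star (W i j) * W i j = ((Complex.normSq (W i j) : ℝ) : ℂ) := fun i => by
      rw [mul_comm]; exact Complex.mul_conj _
    calc ∑ i, Complex.normSq (W i j)
        = Complex.re (∑ i, star (W i j) * W i j) := by
          rw [Complex.re_sum]
          exact (Finset.sum_congr rfl fun i _ => by rw [h2 i, Complex.ofReal_re]).symm
      _ = 1 := by rw [h1]; rfl
  -- real inequality chain
  set l := hA.eigenvalues
  set m := hB.eigenvalues
  set χ : Fin n → ℝ := fun i => if r < l i then 1 else 0 with hχ
  have hχ0 : ∀ i, 0 ≤ χ i := fun i => by by_cases h : r < l i <;> simp [hχ, h]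
  have hχ1 : ∀ i, χ i ≤ 1 := fun i => by by_cases h : r < l i <;> simp [hχ, h]
  have hmax : ∀ i, max 0 (l i - r) = χ i * (l i - r) := by
    intro i
    by_cases h : r < l i
    · rw [max_eq_right (by linarith), hχ]; simp [h]
    · rw [max_eq_left (by push_neg at h; linarith), hχ]; simp [h]
  set c : Fin n → ℝ := fun j => ∑ i, χ i * Complex.normSq (W i j) with hc
  have hc0 : ∀ j, 0 ≤ c j := fun j =>
    Finset.sum_nonneg fun i _ => mul_nonneg (hχ0 i) (Complex.normSq_nonneg _)
  have hc1 : ∀ j, c j ≤ 1 := by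
    intro j
    calc c j ≤ ∑ i, Complex.normSq (W i j) :=
          Finset.sum_le_sum fun i _ => by
            nth_rewrite 2 [← one_mul (Complex.normSq (W i j))]
            exact mul_le_mul_of_nonneg_right (hχ1 i) (Complex.normSq_nonneg _)
      _ = 1 := hcol j
  have hsum : ∑ i, χ i * l i
      = (∑ i, χ i * ∑ j, m j * Complex.normSq (W i j)) + ∑ i, χ i * Complex.re (G i i) := by
    rw [← Finset.sum_add_distrib]
    refine Finset.sum_congr rfl fun i _ => ?_
    rw [entry i]; ring
  have hswap : ∑ i, χ i * ∑ j, m j * Complex.normSq (W i j) = ∑ j, m j * c j := by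
    simp only [Finset.mul_sum, hc]
    rw [Finset.sum_comm]
    exact Finset.sum_congr rfl fun j _ => Finset.sum_congr rfl fun i _ => by ring
  have h3 : ∑ i, χ i * Complex.re (G i i) ≤ ∑ i, χ i * r :=
    Finset.sum_le_sum fun i _ => mul_le_mul_of_nonneg_left (hGre i) (hχ0 i)
  calc ∑ i, max 0 (l i - r)
      = ∑ i, χ i * (l i - r) := Finset.sum_congr rfl fun i _ => hmax i
    _ = ∑ i, χ i * l i - ∑ i, χ i * r := by
        rw [← Finset.sum_sub_distrib]
        exact Finset.sum_congr rfl fun i _ => by ring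
    _ ≤ ∑ j, m j * c j := by linarith [hsum, hswap, h3]
    _ ≤ ∑ j, |m j| := by
        refine Finset.sum_le_sum fun j _ => ?_
        calc m j * c j ≤ |m j| * c j :=
              mul_le_mul_of_nonneg_right (le_abs_self _) (hc0 j)
          _ ≤ |m j| * 1 := mul_le_mul_of_nonneg_left (hc1 j) (abs_nonneg _)
          _ = |m j| := mul_one _

open Matrix in
lemma opNorm_unitary_conj {n : ℕ} (U₀ : Matrix.unitaryGroup (Fin n) ℂ)
    (C : Matrix (Fin n) (Fin n) ℂ) :
    opNorm ((U₀ : Matrix (Fin n) (Fin n) ℂ) * C * star (U₀ : Matrix (Fin n) (Fin n) ℂ))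
      = opNorm C := by
  have hu : Matrix.toEuclideanCLM (𝕜 := ℂ) (U₀ : Matrix (Fin n) (Fin n) ℂ)
      ∈ unitary (EuclideanSpace ℂ (Fin n) →L[ℂ] EuclideanSpace ℂ (Fin n)) := by
    rw [Unitary.mem_iff, ← map_star, ← _root_.map_mul, ← _root_.map_mul,
      Matrix.mem_unitaryGroup_iff'.mp U₀.2, Matrix.mem_unitaryGroup_iff.mp U₀.2]
    exact ⟨map_one _, map_one _⟩
  rw [opNorm, opNorm, _root_.map_mul, _root_.map_mul, map_star,
    CStarRing.norm_mul_mem_unitary _ (Unitary.star_mem hu),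
    CStarRing.norm_mem_unitary_mul _ hu]

open Matrix in
lemma witness {n : ℕ} (A : Matrix (Fin n) (Fin n) ℂ) (hA : A.IsHermitian)
    (hApsd : A.PosSemidef) (r : ℝ) (hr : 0 ≤ r) :
    ∃ B : Matrix (Fin n) (Fin n) ℂ, ∃ hB : B.IsHermitian,
      opNorm (A - B) ≤ r ∧ ∑ i, |hB.eigenvalues i| = ∑ i, max 0 (hA.eigenvalues i - r) := by
  set U : Matrix (Fin n) (Fin n) ℂ := (hA.eigenvectorUnitary : Matrix (Fin n) (Fin n) ℂ) with hU
  have hUU' : star U * U = 1 := Matrix.mem_unitaryGroup_iff'.mp hA.eigenvectorUnitary.2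
  set ν : Fin n → ℝ := fun i => max 0 (hA.eigenvalues i - r) with hν
  set B₀ : Matrix (Fin n) (Fin n) ℂ := U * Matrix.diagonal (fun i => ((ν i : ℝ) : ℂ)) * star U
    with hB₀def
  have hDpsd : (Matrix.diagonal (fun i => ((ν i : ℝ) : ℂ))).PosSemidef :=
    Matrix.posSemidef_diagonal_iff.mpr fun i => by
      rw [Complex.zero_le_real]; exact le_max_left _ _
  have hpsd : B₀.PosSemidef := by
    rw [hB₀def, Matrix.star_eq_conjTranspose]
    exact hDpsd.mul_mul_conjTranspose_same U
  refine ⟨B₀, hpsd.isHermitian, ?_, ?_⟩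
  · -- operator norm bound
    have hdiff : A - B₀ = U * Matrix.diagonal
        (fun i => ((hA.eigenvalues i - ν i : ℝ) : ℂ)) * star U := by
      conv_lhs => rw [hA.spectral_theorem, Unitary.conjStarAlgAut_apply, hB₀def]
      rw [← Matrix.sub_mul, ← Matrix.mul_sub, Matrix.diagonal_sub]
      congr 2
      funext i
      simp only [Function.comp_apply]
      push_cast
      rfl
    rw [hdiff, opNorm_unitary_conj hA.eigenvectorUnitary]
    refine opNorm_diagonal_le _ r hr fun i => ?_
    rw [Complex.norm_real, Real.norm_eq_abs]
    by_cases h : r < hA.eigenvalues i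
    · rw [hν]
      simp only [max_eq_right (by linarith : (0:ℝ) ≤ hA.eigenvalues i - r)]
      rw [show hA.eigenvalues i - (hA.eigenvalues i - r) = r by ring, abs_of_nonneg hr]
    · push_neg at h
      rw [hν]
      simp only [max_eq_left (by linarith : hA.eigenvalues i - r ≤ (0:ℝ))]
      rw [sub_zero, abs_of_nonneg (hApsd.eigenvalues_nonneg i)]
      exact h
  · -- value
    have htr : B₀.trace = ∑ i, ((ν i : ℝ) : ℂ) := by
      rw [hB₀def, Matrix.trace_mul_cycle, hUU', Matrix.one_mul, Matrix.trace_diagonal]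
    have h1 := trace_eq_sum_eigen hpsd.isHermitian
    have h2 : ∑ i, hpsd.isHermitian.eigenvalues i = ∑ i, ν i := by
      have h3 := h1.symm.trans htr
      rw [← Complex.ofReal_sum, ← Complex.ofReal_sum] at h3
      exact_mod_cast h3
    calc ∑ i, |hpsd.isHermitian.eigenvalues i|
        = ∑ i, hpsd.isHermitian.eigenvalues i :=
          Finset.sum_congr rfl fun i _ => abs_of_nonneg (hpsd.eigenvalues_nonneg i)
      _ = ∑ i, ν i := h2

theorem stmt_11 (n : ℕ) (A : Matrix (Fin n) (Fin n) ℂ) (hA : A.IsHermitian)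
    (hApsd : A.PosSemidef) (htr : A.trace = 1) (r : ℝ) (hr : 0 ≤ r) :
    sInf {t : ℝ | ∃ B : Matrix (Fin n) (Fin n) ℂ, ∃ hB : B.IsHermitian,
        opNorm (A - B) ≤ r ∧ t = ∑ i, |hB.eigenvalues i|} =
      ∑ i, max 0 (hA.eigenvalues i - r) := by
  set S := {t : ℝ | ∃ B : Matrix (Fin n) (Fin n) ℂ, ∃ hB : B.IsHermitian,
      opNorm (A - B) ≤ r ∧ t = ∑ i, |hB.eigenvalues i|} with hS
  have hlb : ∀ t ∈ S, ∑ i, max 0 (hA.eigenvalues i - r) ≤ t := by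
    rintro t ⟨B, hB, hle, rfl⟩
    exact lower_bound A hA r hr B hB hle
  obtain ⟨B₀, hB₀, hle₀, hval₀⟩ := witness A hA hApsd r hr
  have hmem : (∑ i, max 0 (hA.eigenvalues i - r)) ∈ S := ⟨B₀, hB₀, hle₀, hval₀.symm⟩
  exact le_antisymm (csInf_le ⟨_, hlb⟩ hmem) (le_csInf ⟨_, hmem⟩ hlb)
end

section
/- Let A be a positive semidefinite n×n Hermitian matrix with trace 1, and let D be the diagonal matrix obtained from A by erasing all off-diagonal entries. Then the entropy of D is at least the entropy of A: -∑ᵢ Aᵢᵢ ln Aᵢᵢ ≥ -∑ᵢ λᵢ ln λᵢ, where λᵢ are the eigenvalues of A. -/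
open scoped ComplexOrder

theorem stmt_12 (n : ℕ) (A : Matrix (Fin n) (Fin n) ℂ) (hA : A.IsHermitian)
    (hApsd : A.PosSemidef) (htr : A.trace = 1) :
    -∑ i, hA.eigenvalues i * Real.log (hA.eigenvalues i) ≤
      -∑ i, (A i i).re * Real.log ((A i i).re) := by
  classical
  set U : Matrix (Fin n) (Fin n) ℂ := (hA.eigenvectorUnitary : Matrix (Fin n) (Fin n) ℂ) with hU
  set w : Fin n → Fin n → ℝ := fun i k => Complex.normSq (U i k) with hw
  have hdiag : ∀ i, (A i i).re = ∑ k, w i k * hA.eigenvalues k := by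
    intro i
    conv_lhs => rw [hA.spectral_theorem, Unitary.conjStarAlgAut_apply]
    rw [Matrix.mul_apply]
    simp only [Matrix.mul_diagonal, Matrix.star_apply]
    rw [Complex.re_sum]
    refine Finset.sum_congr rfl fun k _ => ?_
    have hre : ∀ x : ℝ, ((RCLike.ofReal x : ℂ)).re = x := fun x => rfl
    have him : ∀ x : ℝ, ((RCLike.ofReal x : ℂ)).im = 0 := fun x => rfl
    simp only [hre, him, Function.comp, Complex.star_def, ← hU, hw, Complex.mul_re, Complex.mul_im,
      Complex.conj_re, Complex.conj_im, Complex.normSq_apply, RCLike.ofReal_re, RCLike.ofReal_im, Complex.ofReal_re, Complex.ofReal_im]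
    ring
  have hrow : ∀ i, ∑ k, w i k = 1 := by
    intro i
    have h1 : U * star U = 1 := Matrix.mem_unitaryGroup_iff.mp hA.eigenvectorUnitary.2
    have := congrArg (fun M => (M i i).re) h1
    simp only [Matrix.mul_apply, Matrix.star_apply, Matrix.one_apply_eq, Complex.one_re] at this
    rw [← this, Complex.re_sum]
    refine Finset.sum_congr rfl fun k _ => ?_
    simp [hw, Complex.star_def, Complex.mul_conj]
  have hcol : ∀ k, ∑ i, w i k = 1 := by
    intro k
    have h1 : star U * U = 1 := Matrix.mem_unitaryGroup_iff'.mp hA.eigenvectorUnitary.2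
    have := congrArg (fun M => (M k k).re) h1
    simp only [Matrix.mul_apply, Matrix.star_apply, Matrix.one_apply_eq, Complex.one_re] at this
    rw [← this, Complex.re_sum]
    refine Finset.sum_congr rfl fun i _ => ?_
    simp [hw, Complex.star_def, mul_comm, Complex.mul_conj]
  have hev : ∀ k, (0:ℝ) ≤ hA.eigenvalues k := fun k => hApsd.eigenvalues_nonneg k
  have key : ∀ i, ∑ k, w i k * Real.negMulLog (hA.eigenvalues k)
      ≤ Real.negMulLog ((A i i).re) := by
    intro i
    have := Real.concaveOn_negMulLog.le_map_sum (t := Finset.univ)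
      (w := w i) (p := fun k => hA.eigenvalues k)
      (fun k _ => Complex.normSq_nonneg _) (hrow i) (fun k _ => hev k)
    simpa [smul_eq_mul, hdiag i] using this
  have main : ∑ k, Real.negMulLog (hA.eigenvalues k)
      ≤ ∑ i, Real.negMulLog ((A i i).re) := by
    calc ∑ k, Real.negMulLog (hA.eigenvalues k)
        = ∑ k, (∑ i, w i k) * Real.negMulLog (hA.eigenvalues k) := by
          simp [hcol]
      _ = ∑ i, ∑ k, w i k * Real.negMulLog (hA.eigenvalues k) := by
          rw [Finset.sum_comm]; simp [Finset.sum_mul]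
      _ ≤ ∑ i, Real.negMulLog ((A i i).re) := Finset.sum_le_sum fun i _ => key i
  simpa [Real.negMulLog, neg_mul, Finset.sum_neg_distrib] using main
end

section
/- Let π : ℓ¹(ℕ,ℝ) → ℓ¹(ℕ,ℝ) be a linear ℓ¹-contraction that is self-adjoint with respect to the pairing ⟨a,b⟩ = ∑ aᵢbᵢ (for b ∈ ℓ∞ ∩ ℓ¹): ⟨π a, b⟩ = ⟨a, π b⟩ for all a, b ∈ ℓ¹. Then π is also a contraction for the sup norm: ‖π a‖_∞ ≤ ‖a‖_∞ for all a ∈ ℓ¹. -/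
lemma aux_norm_eq (x : lp (fun _ : ℕ => ℝ) 1) : ‖x‖ = ∑' j, |x j| := by
  rw [lp.norm_eq_tsum_rpow (by norm_num) x]
  simp [Real.rpow_one, Real.norm_eq_abs]

lemma aux_summable (x : lp (fun _ : ℕ => ℝ) 1) : Summable (fun j => |x j|) := by
  have := (lp.memℓp x).summable (p := 1) (by norm_num)
  simpa [Real.norm_eq_abs] using this

lemma aux_abs_tsum {f : ℕ → ℝ} (h : Summable fun j => |f j|) :
    |∑' j, f j| ≤ ∑' j, |f j| := by
  simpa [Real.norm_eq_abs] using
    norm_tsum_le_tsum_norm (f := f) (by simpa [Real.norm_eq_abs] using h)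

theorem stmt_16 (π : lp (fun _ : ℕ => ℝ) 1 →ₗ[ℝ] lp (fun _ : ℕ => ℝ) 1)
    (hcontr : ∀ a, ‖π a‖ ≤ ‖a‖)
    (hsa : ∀ a b : lp (fun _ : ℕ => ℝ) 1,
      (∑' i, (π a) i * b i) = ∑' i, a i * (π b) i) :
    ∀ a : lp (fun _ : ℕ => ℝ) 1, (⨆ i, |(π a) i|) ≤ ⨆ i, |a i| := by
  intro a
  set S := ⨆ i, |a i| with hS
  have hbdd : BddAbove (Set.range fun i => |a i|) :=
    ⟨‖a‖, by
      rintro _ ⟨i, rfl⟩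
      simpa [Real.norm_eq_abs] using lp.norm_apply_le_norm one_ne_zero a i⟩
  have hle : ∀ j, |a j| ≤ S := fun j => le_ciSup hbdd j
  refine ciSup_le fun i => ?_
  set e : lp (fun _ : ℕ => ℝ) 1 := lp.single 1 i 1 with he
  -- (π a) i = ∑' j, (π a) j * e j
  have h1 : (∑' j, (π a) j * e j) = (π a) i := by
    rw [tsum_eq_single i]
    · simp [he, lp.single_apply_self]
    · intro j hj; simp [he, lp.single_apply_ne _ _ _ hj, Pi.single_apply, hj]
  have h2 : (π a) i = ∑' j, a j * (π e) j := by rw [← h1, hsa]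
  have hsum : Summable fun j => |a j * (π e) j| := by
    refine Summable.of_nonneg_of_le (fun j => abs_nonneg _) (fun j => ?_)
      ((aux_summable (π e)).mul_left S)
    rw [abs_mul]
    exact mul_le_mul_of_nonneg_right (hle j) (abs_nonneg _)
  have h3 : |(π a) i| ≤ ∑' j, |a j * (π e) j| := by
    rw [h2]
    exact aux_abs_tsum hsum
  have h4 : (∑' j, |a j * (π e) j|) ≤ ∑' j, S * |(π e) j| := by
    refine Summable.tsum_le_tsum (fun j => ?_) hsum ((aux_summable (π e)).mul_left S)
    rw [abs_mul]
    exact mul_le_mul_of_nonneg_right (hle j) (abs_nonneg _)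
  have h5 : (∑' j, S * |(π e) j|) = S * ‖π e‖ := by
    rw [aux_norm_eq (π e), tsum_mul_left]
  have hne : ‖e‖ = 1 := by
    rw [he]
    have := lp.norm_single (E := fun _ : ℕ => ℝ) (p := 1) (by norm_num) i (1 : ℝ)
    simpa using this
  have hS0 : 0 ≤ S := le_trans (abs_nonneg _) (hle 0)
  calc |(π a) i| ≤ ∑' j, |a j * (π e) j| := h3
    _ ≤ ∑' j, S * |(π e) j| := h4
    _ = S * ‖π e‖ := h5
    _ ≤ S * 1 := by
        refine mul_le_mul_of_nonneg_left ?_ hS0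
        simpa [hne] using hcontr e
    _ = S := mul_one S
end

section
/- Let ω : Fin n → ℝ and σ : Fin m → ℝ be nonnegative sequences each summing to 1, and suppose ∑ᵢ max(0, ωᵢ - r) = ∑ⱼ max(0, σⱼ - r) for all r ≥ 0. Then ω and σ have the same nonzero entries with multiplicity (their multisets of positive values coincide), and in particular -∑ᵢ ωᵢ ln ωᵢ = -∑ⱼ σⱼ ln σⱼ. -/
open Multiset

private lemma my_exists_max (S : Multiset ℝ) (hS : S ≠ 0) : ∃ a ∈ S, ∀ x ∈ S, x ≤ a := by
  induction S using Multiset.induction with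
  | empty => simp at hS
  | cons a s ih =>
    rcases eq_or_ne s 0 with rfl | hs
    · exact ⟨a, mem_cons_self a _, by simp⟩
    · obtain ⟨b, hb, hmax⟩ := ih hs
      rcases le_total a b with hab | hab
      · exact ⟨b, mem_cons_of_mem hb, fun x hx => by
          rcases mem_cons.1 hx with rfl | hx
          · exact hab
          · exact hmax x hx⟩
      · exact ⟨a, mem_cons_self a _, fun x hx => by
          rcases mem_cons.1 hx with rfl | hx
          · exact le_refl _
          · exact (hmax x hx).trans hab⟩

private lemma my_sum_map_filter_pos (S : Multiset ℝ) (g : ℝ → ℝ) (hg : g 0 = 0)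
    (hS : ∀ x ∈ S, 0 ≤ x) :
    ((S.filter (fun x => 0 < x)).map g).sum = (S.map g).sum := by
  induction S using Multiset.induction with
  | empty => simp
  | cons a s ih =>
    have ha := hS a (mem_cons_self a s)
    have hs : ∀ x ∈ s, 0 ≤ x := fun x hx => hS x (mem_cons_of_mem hx)
    by_cases hpa : 0 < a
    · rw [filter_cons_of_pos _ hpa, map_cons, sum_cons, map_cons, sum_cons, ih hs]
    · have ha0 : a = 0 := le_antisymm (not_lt.1 hpa) ha
      rw [filter_cons_of_neg _ hpa, map_cons, sum_cons, ih hs, ha0, hg, zero_add]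

private lemma my_key (A : Multiset ℝ) : ∀ B : Multiset ℝ, (∀ a ∈ A, 0 < a) → (∀ b ∈ B, 0 < b) →
    (∀ r : ℝ, 0 ≤ r → (A.map (fun a => max 0 (a - r))).sum
      = (B.map (fun b => max 0 (b - r))).sum) →
    A = B := by
  induction A using Multiset.strongInductionOn with
  | ih A IH =>
    intro B hA hB h
    have sum_zero : ∀ (S : Multiset ℝ), (∀ x ∈ S, 0 < x) →
        (S.map (fun a => max 0 (a - (0:ℝ)))).sum = 0 → S = 0 := by
      intro S hS hsum
      by_contra hne
      obtain ⟨x, hx, _⟩ := my_exists_max S hne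
      have hx0 := hS x hx
      have hterm : max 0 (x - 0) ∈ S.map (fun a => max 0 (a - (0:ℝ))) :=
        mem_map_of_mem _ hx
      have := Multiset.single_le_sum (fun y hy => by
        obtain ⟨a, _, rfl⟩ := Multiset.mem_map.1 hy
        exact le_max_left _ _) _ hterm
      rw [hsum] at this
      have : max 0 (x - 0) > 0 := by
        simp only [sub_zero]
        exact lt_max_of_lt_right hx0
      linarith [Multiset.single_le_sum (fun y (hy : y ∈ S.map (fun a => max 0 (a - (0:ℝ)))) => by
        obtain ⟨a, _, rfl⟩ := Multiset.mem_map.1 hy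
        exact le_max_left _ _) _ hterm, hsum, this]
    rcases eq_or_ne A 0 with rfl | hAne
    · have := (h 0 le_rfl).symm
      simp only [Multiset.map_zero, Multiset.sum_zero] at this
      exact (sum_zero B hB this).symm
    have hBne : B ≠ 0 := by
      intro hB0
      have := h 0 le_rfl
      rw [hB0] at this
      simp only [Multiset.map_zero, Multiset.sum_zero] at this
      exact hAne (sum_zero A hA this)
    obtain ⟨a, haA, hamax⟩ := my_exists_max A hAne
    obtain ⟨b, hbB, hbmax⟩ := my_exists_max B hBne
    -- show a = b
    have hab : a = b := by
      by_contra hne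
      rcases lt_or_gt_of_ne hne with hlt | hgt
      · -- a < b : use r = a
        have hr : (0:ℝ) ≤ a := (hA a haA).le
        have heq := h a hr
        have hLHS : (A.map (fun x => max 0 (x - a))).sum = 0 := by
          apply Multiset.sum_eq_zero
          intro y hy
          obtain ⟨x, hx, rfl⟩ := Multiset.mem_map.1 hy
          have := hamax x hx
          simp [max_eq_left, sub_nonpos.2 this]
        have hterm : max 0 (b - a) ∈ B.map (fun x => max 0 (x - a)) :=
          mem_map_of_mem _ hbB
        have hle := Multiset.single_le_sum (fun y hy => by
          obtain ⟨x, _, rfl⟩ := Multiset.mem_map.1 hy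
          exact le_max_left _ _) _ hterm
        have hpos : (0:ℝ) < max 0 (b - a) := lt_max_of_lt_right (by linarith)
        rw [hLHS] at heq
        linarith
      · -- b < a : use r = b
        have hr : (0:ℝ) ≤ b := (hB b hbB).le
        have heq := h b hr
        have hRHS : (B.map (fun x => max 0 (x - b))).sum = 0 := by
          apply Multiset.sum_eq_zero
          intro y hy
          obtain ⟨x, hx, rfl⟩ := Multiset.mem_map.1 hy
          have := hbmax x hx
          simp [max_eq_left, sub_nonpos.2 this]
        have hterm : max 0 (a - b) ∈ A.map (fun x => max 0 (x - b)) :=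
          mem_map_of_mem _ haA
        have hle := Multiset.single_le_sum (fun y hy => by
          obtain ⟨x, _, rfl⟩ := Multiset.mem_map.1 hy
          exact le_max_left _ _) _ hterm
        have hpos : (0:ℝ) < max 0 (a - b) := lt_max_of_lt_right (by linarith)
        rw [hRHS] at heq
        linarith
    -- erase and induct
    subst hab
    have hAcons : a ::ₘ A.erase a = A := Multiset.cons_erase haA
    have hBcons : a ::ₘ B.erase a = B := Multiset.cons_erase hbB
    have hlt : A.erase a < A := by
      conv_rhs => rw [← hAcons]
      exact Multiset.lt_cons_self _ _
    have hIH := IH (A.erase a) hlt (B.erase a)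
      (fun x hx => hA x (Multiset.mem_of_mem_erase hx))
      (fun x hx => hB x (Multiset.mem_of_mem_erase hx))
      (by
        intro r hr
        have heq := h r hr
        rw [← hAcons, ← hBcons, map_cons, map_cons, sum_cons, sum_cons] at heq
        exact add_left_cancel heq)
    rw [← hAcons, ← hBcons, hIH]

theorem stmt_17 (n m : ℕ) (ω : Fin n → ℝ) (σ : Fin m → ℝ)
    (hω : ∀ i, 0 ≤ ω i) (hσ : ∀ j, 0 ≤ σ j)
    (hω1 : ∑ i, ω i = 1) (hσ1 : ∑ j, σ j = 1)
    (h : ∀ r : ℝ, 0 ≤ r → ∑ i, max 0 (ω i - r) = ∑ j, max 0 (σ j - r)) :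
    ((Finset.univ.val.map ω).filter (fun x => 0 < x)) =
      ((Finset.univ.val.map σ).filter (fun x => 0 < x)) ∧
    -∑ i, ω i * Real.log (ω i) = -∑ j, σ j * Real.log (σ j) := by
  set A := ((Finset.univ.val.map ω).filter (fun x => 0 < x)) with hAdef
  set B := ((Finset.univ.val.map σ).filter (fun x => 0 < x)) with hBdef
  have hωmem : ∀ x ∈ (Finset.univ.val.map ω), 0 ≤ x := by
    intro x hx
    obtain ⟨i, _, rfl⟩ := Multiset.mem_map.1 hx
    exact hω i
  have hσmem : ∀ x ∈ (Finset.univ.val.map σ), 0 ≤ x := by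
    intro x hx
    obtain ⟨j, _, rfl⟩ := Multiset.mem_map.1 hx
    exact hσ j
  have hsumω : ∀ g : ℝ → ℝ, g 0 = 0 → (A.map g).sum = ∑ i, g (ω i) := by
    intro g hg
    rw [hAdef, my_sum_map_filter_pos _ g hg hωmem, Multiset.map_map]
    rfl
  have hsumσ : ∀ g : ℝ → ℝ, g 0 = 0 → (B.map g).sum = ∑ j, g (σ j) := by
    intro g hg
    rw [hBdef, my_sum_map_filter_pos _ g hg hσmem, Multiset.map_map]
    rfl
  have hAB : A = B := by
    apply my_key
    · intro x hx
      exact (Multiset.mem_filter.1 hx).2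
    · intro x hx
      exact (Multiset.mem_filter.1 hx).2
    · intro r hr
      have hg : max 0 ((0:ℝ) - r) = 0 := max_eq_left (by linarith)
      rw [hsumω (fun x => max 0 (x - r)) hg, hsumσ (fun x => max 0 (x - r)) hg]
      exact h r hr
  constructor
  · exact hAB
  · have hg : (0:ℝ) * Real.log 0 = 0 := zero_mul _
    have h1 := hsumω (fun x => x * Real.log x) hg
    have h2 := hsumσ (fun x => x * Real.log x) hg
    rw [← h1, ← h2, hAB]
end
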